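/- arXiv:2403.08075 — 5 statements merged into one kernel-verified Lean document; each statement's English description precedes it below -/
import Mathlib

section
/- Let n ≥ 2, R > 0, μ ≥ 0, and let φ : [0,∞) → ℝ be continuously differentiable with φ' ≤ 0. Let T : [0,R] → ℝ be twice continuously differentiable with T(0) = 0, T'(t) ≥ 0 for all t ∈ [0,R], T'(R) = 0, and suppose T''(t) + ((n−1)/t − φ'(t)) T'(t) + (μ − (n−1)/t²) T(t) = 0 for all t ∈ (0,R). Define h : (0,∞) → ℝ by h(t) = T(t) for t ∈ (0,R] and h(t) = T(R) for t > R. Then h is nondecreasing on (0,∞), and the function t ↦ h'(t)² + (n−1) h(t)²/t² (which equals T'(t)² + (n−1)T(t)²/t² on (0,R] and (n−1)T(R)²/t² for t > R) is nonincreasing on (0,∞). -/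
open Set

/-- **Lemma 4.3 (Euclidean radial profile)**: let `T` solve the radial ODE
`T'' + ((n-1)/t - φ') T' + (μ - (n-1)/t²) T = 0` on `(0,R)` with `T(0) = 0`, `T' ≥ 0` on
`[0,R]` and `T'(R) = 0`, where `μ ≥ 0` and `φ` is continuously differentiable with
`φ' ≤ 0`. Then the extension `h` of `T` by the constant value `T(R)` for `t > R` is
nondecreasing on `(0,∞)`, and `t ↦ h'(t)² + (n-1) h(t)²/t²` (which equals
`T'(t)² + (n-1)T(t)²/t²` on `(0,R]` and `(n-1)T(R)²/t²` for `t > R`) is nonincreasing on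
`(0,∞)`. -/
theorem radial_profile_monotone_euclidean
    (n : ℕ) (hn : 2 ≤ n) (R μ : ℝ) (hR : 0 < R) (hμ : 0 ≤ μ)
    (φ φ' : ℝ → ℝ)
    (hφ : ∀ t ∈ Ici (0 : ℝ), HasDerivWithinAt φ (φ' t) (Ici 0) t)
    (hφ'cont : ContinuousOn φ' (Ici 0))
    (hφ'nonpos : ∀ t ∈ Ici (0 : ℝ), φ' t ≤ 0)
    (T T' T'' : ℝ → ℝ)
    (hT : ∀ t ∈ Icc (0 : ℝ) R, HasDerivWithinAt T (T' t) (Icc 0 R) t)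
    (hT' : ∀ t ∈ Icc (0 : ℝ) R, HasDerivWithinAt T' (T'' t) (Icc 0 R) t)
    (hT''cont : ContinuousOn T'' (Icc 0 R))
    (hT0 : T 0 = 0)
    (hT'nonneg : ∀ t ∈ Icc (0 : ℝ) R, 0 ≤ T' t)
    (hT'R : T' R = 0)
    (hODE : ∀ t ∈ Ioo (0 : ℝ) R,
      T'' t + (((n : ℝ) - 1) / t - φ' t) * T' t + (μ - ((n : ℝ) - 1) / t ^ 2) * T t = 0) :
    MonotoneOn (fun t => if t ≤ R then T t else T R) (Ioi (0 : ℝ)) ∧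
    AntitoneOn (fun t => if t ≤ R then T' t ^ 2 + ((n : ℝ) - 1) * T t ^ 2 / t ^ 2
      else ((n : ℝ) - 1) * T R ^ 2 / t ^ 2) (Ioi (0 : ℝ)) := by
  have hn1 : (1:ℝ) ≤ (n:ℝ) - 1 := by
    have : (2:ℝ) ≤ (n:ℝ) := by exact_mod_cast hn
    linarith
  have hn0 : (0:ℝ) ≤ (n:ℝ) - 1 := by linarith
  have hTc : ContinuousOn T (Icc 0 R) := fun x hx => (hT x hx).continuousWithinAt
  have hT'c : ContinuousOn T' (Icc 0 R) := fun x hx => (hT' x hx).continuousWithinAt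
  have hTd : ∀ x ∈ Ioo (0:ℝ) R, HasDerivAt T (T' x) x := fun x hx =>
    (hT x (Ioo_subset_Icc_self hx)).hasDerivAt (Icc_mem_nhds hx.1 hx.2)
  have hT'd : ∀ x ∈ Ioo (0:ℝ) R, HasDerivAt T' (T'' x) x := fun x hx =>
    (hT' x (Ioo_subset_Icc_self hx)).hasDerivAt (Icc_mem_nhds hx.1 hx.2)
  have hTmono : MonotoneOn T (Icc 0 R) := by
    apply monotoneOn_of_deriv_nonneg (convex_Icc 0 R) hTc
    · intro x hx
      rw [interior_Icc] at hx
      exact (hTd x hx).differentiableAt.differentiableWithinAt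
    · intro x hx
      rw [interior_Icc] at hx
      rw [(hTd x hx).deriv]
      exact hT'nonneg x (Ioo_subset_Icc_self hx)
  have hTnonneg : ∀ t ∈ Icc (0:ℝ) R, 0 ≤ T t := by
    intro t ht
    have := hTmono ⟨le_refl 0, hR.le⟩ ht ht.1
    rwa [hT0] at this
  -- derivative of the energy on the interior
  have hE : ∀ x ∈ Ioo (0:ℝ) R, HasDerivAt (fun t => T' t ^ 2 + ((n:ℝ)-1) * T t ^ 2 / t ^ 2)
      (2 * T' x * T'' x + ((((n:ℝ)-1) * (2 * T x * T' x)) * x ^ 2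
        - (((n:ℝ)-1) * T x ^ 2) * (2 * x)) / (x ^ 2) ^ 2) x := by
    intro x hx
    have hx0 : x ≠ 0 := ne_of_gt hx.1
    have hA : HasDerivAt (fun t => T' t ^ 2) (2 * T' x * T'' x) x := by
      simpa using (hT'd x hx).fun_pow 2
    have hB : HasDerivAt (fun t => ((n:ℝ)-1) * T t ^ 2) (((n:ℝ)-1) * (2 * T x * T' x)) x := by
      have : HasDerivAt (fun t => T t ^ 2) (2 * T x * T' x) x := by
        simpa using (hTd x hx).fun_pow 2
      exact this.const_mul _
    have hC : HasDerivAt (fun t : ℝ => t ^ 2) (2 * x) x := by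
      simpa using hasDerivAt_pow 2 x
    exact hA.add (hB.div hC (pow_ne_zero 2 hx0))
  have key : ∀ x ∈ Ioo (0:ℝ) R,
      2 * T' x * T'' x + ((((n:ℝ)-1) * (2 * T x * T' x)) * x ^ 2
        - (((n:ℝ)-1) * T x ^ 2) * (2 * x)) / (x ^ 2) ^ 2 ≤ 0 := by
    intro x hx
    have hxpos : (0:ℝ) < x := hx.1
    have hode := hODE x hx
    have hTx := hTnonneg x (Ioo_subset_Icc_self hx)
    have hT'x := hT'nonneg x (Ioo_subset_Icc_self hx)
    have hφ'x : φ' x ≤ 0 := hφ'nonpos x (mem_Ici.mpr hxpos.le)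
    have hT''eq : T'' x = -((((n:ℝ)-1)/x - φ' x) * T' x) - (μ - ((n:ℝ)-1)/x^2) * T x := by
      linarith
    rw [hT''eq]
    have heq : 2 * T' x * (-((((n:ℝ)-1)/x - φ' x) * T' x) - (μ - ((n:ℝ)-1)/x^2) * T x)
        + ((((n:ℝ)-1) * (2 * T x * T' x)) * x ^ 2
          - (((n:ℝ)-1) * T x ^ 2) * (2 * x)) / (x ^ 2) ^ 2
        = 2 * φ' x * T' x ^ 2 - 2 * μ * T x * T' x
          - 2 * ((n:ℝ)-1) * (x * T' x - T x) ^ 2 / x ^ 3 := by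
      field_simp
      ring
    rw [heq]
    have h1 : 2 * φ' x * T' x ^ 2 ≤ 0 := by nlinarith [sq_nonneg (T' x)]
    have h2 : (0:ℝ) ≤ 2 * μ * T x * T' x := by positivity
    have h3 : (0:ℝ) ≤ 2 * ((n:ℝ)-1) * (x * T' x - T x) ^ 2 / x ^ 3 := by
      apply div_nonneg _ (by positivity)
      have := sq_nonneg (x * T' x - T x)
      nlinarith
    linarith
  have hEanti : AntitoneOn (fun t => T' t ^ 2 + ((n:ℝ)-1) * T t ^ 2 / t ^ 2) (Ioc 0 R) := by
    apply antitoneOn_of_deriv_nonpos (convex_Ioc 0 R)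
    · apply ContinuousOn.add
      · exact (hT'c.mono Ioc_subset_Icc_self).pow 2
      · apply ContinuousOn.div
        · exact continuousOn_const.mul ((hTc.mono Ioc_subset_Icc_self).pow 2)
        · exact (continuous_pow 2).continuousOn
        · intro t ht
          exact pow_ne_zero 2 (ne_of_gt ht.1)
    · intro x hx
      rw [interior_Ioc] at hx
      exact (hE x hx).differentiableAt.differentiableWithinAt
    · intro x hx
      rw [interior_Ioc] at hx
      rw [(hE x hx).deriv]
      exact key x hx
  have hER : T' R ^ 2 + ((n:ℝ)-1) * T R ^ 2 / R ^ 2 = ((n:ℝ)-1) * T R ^ 2 / R ^ 2 := by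
    rw [hT'R]; ring
  have hg : ∀ x y : ℝ, 0 < x → x ≤ y →
      ((n:ℝ)-1) * T R ^ 2 / y ^ 2 ≤ ((n:ℝ)-1) * T R ^ 2 / x ^ 2 := by
    intro x y hx hxy
    have hc : (0:ℝ) ≤ ((n:ℝ)-1) * T R ^ 2 := by positivity
    gcongr
  constructor
  · intro x hx y hy hxy
    simp only [mem_Ioi] at hx hy
    by_cases hyR : y ≤ R
    · have hxR : x ≤ R := le_trans hxy hyR
      simp only [hxR, hyR, if_true]
      exact hTmono ⟨hx.le, hxR⟩ ⟨hy.le, hyR⟩ hxy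
    · by_cases hxR : x ≤ R
      · simp only [hxR, hyR, if_true, if_false]
        exact hTmono ⟨hx.le, hxR⟩ ⟨hR.le, le_refl R⟩ hxR
      · simp only [hxR, hyR, if_false]
        exact le_refl _
  · intro x hx y hy hxy
    simp only [mem_Ioi] at hx hy
    by_cases hyR : y ≤ R
    · have hxR : x ≤ R := le_trans hxy hyR
      simp only [hxR, hyR, if_true]
      exact hEanti ⟨hx, hxR⟩ ⟨hy, hyR⟩ hxy
    · by_cases hxR : x ≤ R
      · simp only [hxR, hyR, if_true, if_false]
        calc ((n:ℝ)-1) * T R ^ 2 / y ^ 2 ≤ ((n:ℝ)-1) * T R ^ 2 / R ^ 2 :=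
              hg R y hR (le_of_not_ge hyR)
          _ = T' R ^ 2 + ((n:ℝ)-1) * T R ^ 2 / R ^ 2 := hER.symm
          _ ≤ T' x ^ 2 + ((n:ℝ)-1) * T x ^ 2 / x ^ 2 :=
              hEanti ⟨hx, hxR⟩ ⟨hR, le_refl R⟩ hxR
      · simp only [hxR, hyR, if_false]
        exact hg x y hx hxy
end

section
/- Let n ≥ 2, R > 0, μ ≥ 0, and let φ : [0,∞) → ℝ be continuously differentiable with φ' ≤ 0. Let T : [0,R] → ℝ be twice continuously differentiable with T(0) = 0 and T'(t) ≥ 0 for all t ∈ [0,R], and suppose T''(t) + ((n−1)·cosh(t)/sinh(t) − φ'(t)) T'(t) + (μ − (n−1)/sinh(t)²) T(t) = 0 for all t ∈ (0,R). Then the function t ↦ T'(t)² + (n−1) T(t)²/sinh(t)² is nonincreasing on (0,R). -/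
open Set

/-- **Hyperbolic radial profile monotonicity** (as used in the proof of Theorem 1.8): let
`T` solve the radial ODE `T'' + ((n-1) cosh t / sinh t - φ') T' + (μ - (n-1)/sinh² t) T = 0`
on `(0,R)` with `T(0) = 0` and `T' ≥ 0` on `[0,R]`, where `μ ≥ 0` and `φ` is continuously
differentiable with `φ' ≤ 0`. Then `t ↦ T'(t)² + (n-1) T(t)²/sinh(t)²` is nonincreasing on
`(0,R)`. -/
theorem radial_profile_antitone_hyperbolic
    (n : ℕ) (hn : 2 ≤ n) (R μ : ℝ) (hR : 0 < R) (hμ : 0 ≤ μ)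
    (φ φ' : ℝ → ℝ)
    (hφ : ∀ t ∈ Ici (0 : ℝ), HasDerivWithinAt φ (φ' t) (Ici 0) t)
    (hφ'cont : ContinuousOn φ' (Ici 0))
    (hφ'nonpos : ∀ t ∈ Ici (0 : ℝ), φ' t ≤ 0)
    (T T' T'' : ℝ → ℝ)
    (hT : ∀ t ∈ Icc (0 : ℝ) R, HasDerivWithinAt T (T' t) (Icc 0 R) t)
    (hT' : ∀ t ∈ Icc (0 : ℝ) R, HasDerivWithinAt T' (T'' t) (Icc 0 R) t)
    (hT''cont : ContinuousOn T'' (Icc 0 R))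
    (hT0 : T 0 = 0)
    (hT'nonneg : ∀ t ∈ Icc (0 : ℝ) R, 0 ≤ T' t)
    (hODE : ∀ t ∈ Ioo (0 : ℝ) R,
      T'' t + (((n : ℝ) - 1) * Real.cosh t / Real.sinh t - φ' t) * T' t +
        (μ - ((n : ℝ) - 1) / Real.sinh t ^ 2) * T t = 0) :
    AntitoneOn (fun t => T' t ^ 2 + ((n : ℝ) - 1) * T t ^ 2 / Real.sinh t ^ 2)
      (Ioo (0 : ℝ) R) := by
  have hTat : ∀ t ∈ Ioo (0:ℝ) R, HasDerivAt T (T' t) t := fun t ht =>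
    (hT t (Ioo_subset_Icc_self ht)).hasDerivAt (Icc_mem_nhds ht.1 ht.2)
  have hT'at : ∀ t ∈ Ioo (0:ℝ) R, HasDerivAt T' (T'' t) t := fun t ht =>
    (hT' t (Ioo_subset_Icc_self ht)).hasDerivAt (Icc_mem_nhds ht.1 ht.2)
  -- T is nonnegative on Icc 0 R
  have hTcont : ContinuousOn T (Icc 0 R) := fun t ht => (hT t ht).continuousWithinAt
  have hTmono : MonotoneOn T (Icc 0 R) := by
    apply monotoneOn_of_deriv_nonneg (convex_Icc 0 R) hTcont
    · intro t ht
      rw [interior_Icc] at ht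
      exact (hTat t ht).differentiableAt.differentiableWithinAt
    · intro t ht
      rw [interior_Icc] at ht
      rw [(hTat t ht).deriv]
      exact hT'nonneg t (Ioo_subset_Icc_self ht)
  have hTnonneg : ∀ t ∈ Ioo (0:ℝ) R, 0 ≤ T t := by
    intro t ht
    have := hTmono (left_mem_Icc.2 hR.le) (Ioo_subset_Icc_self ht) ht.1.le
    rwa [hT0] at this
  -- derivative of the energy
  have hE : ∀ t ∈ Ioo (0:ℝ) R, HasDerivAt
      (fun t => T' t ^ 2 + ((n : ℝ) - 1) * T t ^ 2 / Real.sinh t ^ 2)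
      (2 * T' t * T'' t +
        ((((n:ℝ)-1) * (2 * T t * T' t)) * Real.sinh t ^ 2 -
          (((n:ℝ)-1) * T t ^ 2) * (2 * Real.sinh t * Real.cosh t)) /
          (Real.sinh t ^ 2) ^ 2) t := by
    intro t ht
    have hs : (0:ℝ) < Real.sinh t := Real.sinh_pos_iff.2 ht.1
    have h1 : HasDerivAt (fun t => T' t ^ 2) (2 * T' t * T'' t) t := by
      have := (hT'at t ht).fun_pow 2
      simpa [mul_comm, mul_assoc, mul_left_comm] using this
    have h2 : HasDerivAt (fun t => ((n:ℝ)-1) * T t ^ 2) (((n:ℝ)-1) * (2 * T t * T' t)) t := by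
      have := ((hTat t ht).fun_pow 2).const_mul ((n:ℝ)-1)
      exact this.congr_deriv (by ring)
    have h3 : HasDerivAt (fun t => Real.sinh t ^ 2) (2 * Real.sinh t * Real.cosh t) t := by
      have := (Real.hasDerivAt_sinh t).fun_pow 2
      exact this.congr_deriv (by ring)
    have h4 := h2.div h3 (by positivity)
    exact h1.add h4
  have hE'nonpos : ∀ t ∈ Ioo (0:ℝ) R,
      2 * T' t * T'' t +
        ((((n:ℝ)-1) * (2 * T t * T' t)) * Real.sinh t ^ 2 -
          (((n:ℝ)-1) * T t ^ 2) * (2 * Real.sinh t * Real.cosh t)) /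
          (Real.sinh t ^ 2) ^ 2 ≤ 0 := by
    intro t ht
    have hs : (0:ℝ) < Real.sinh t := Real.sinh_pos_iff.2 ht.1
    have hc : (1:ℝ) ≤ Real.cosh t := Real.one_le_cosh t
    have ha : 0 ≤ T t := hTnonneg t ht
    have hb : 0 ≤ T' t := hT'nonneg t (Ioo_subset_Icc_self ht)
    have hp : φ' t ≤ 0 := hφ'nonpos t ht.1.le
    have hm : (1:ℝ) ≤ (n:ℝ) - 1 := by
      have : (2:ℝ) ≤ (n:ℝ) := by exact_mod_cast hn
      linarith
    have hB : T'' t = -(((n:ℝ)-1) * Real.cosh t / Real.sinh t - φ' t) * T' t -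
        (μ - ((n:ℝ)-1) / Real.sinh t ^ 2) * T t := by
      have h := hODE t ht
      linarith
    have hs' : Real.sinh t ≠ 0 := hs.ne'
    have heq : 2 * T' t * T'' t +
        ((((n:ℝ)-1) * (2 * T t * T' t)) * Real.sinh t ^ 2 -
          (((n:ℝ)-1) * T t ^ 2) * (2 * Real.sinh t * Real.cosh t)) /
          (Real.sinh t ^ 2) ^ 2 =
        (2 * φ' t * T' t ^ 2 * Real.sinh t ^ 3 - 2 * μ * T t * T' t * Real.sinh t ^ 3
          - 2 * ((n:ℝ)-1) * Real.cosh t * T' t ^ 2 * Real.sinh t ^ 2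
          + 4 * ((n:ℝ)-1) * T t * T' t * Real.sinh t
          - 2 * ((n:ℝ)-1) * T t ^ 2 * Real.cosh t) / Real.sinh t ^ 3 := by
      rw [hB]
      field_simp
      ring
    rw [heq]
    apply div_nonpos_of_nonpos_of_nonneg _ (by positivity)
    have h1 : 0 ≤ ((n:ℝ)-1) * (T' t * Real.sinh t - T t) ^ 2 :=
      mul_nonneg (by linarith) (sq_nonneg _)
    have h2 : 0 ≤ ((n:ℝ)-1) * ((Real.cosh t - 1) * (T' t ^ 2 * Real.sinh t ^ 2 + T t ^ 2)) :=
      mul_nonneg (by linarith) (mul_nonneg (by linarith) (by positivity))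
    have h3 : 0 ≤ μ * T t * T' t * Real.sinh t ^ 3 :=
      mul_nonneg (mul_nonneg (mul_nonneg hμ ha) hb) (by positivity)
    have h4 : 0 ≤ (-φ' t) * T' t ^ 2 * Real.sinh t ^ 3 :=
      mul_nonneg (mul_nonneg (by linarith) (sq_nonneg _)) (by positivity)
    nlinarith [h1, h2, h3, h4]
  apply antitoneOn_of_deriv_nonpos (convex_Ioo 0 R)
  · exact fun t ht => ((hE t ht).continuousAt).continuousWithinAt
  · intro t ht
    rw [interior_Ioo] at ht
    exact (hE t ht).differentiableAt.differentiableWithinAt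
  · intro t ht
    rw [interior_Ioo] at ht
    rw [(hE t ht).deriv]
    exact hE'nonpos t ht
end

section
/- Let n ≥ 2, let φ : [0,∞) → ℝ be continuous, let Ω ⊆ ℝⁿ be a bounded measurable set, and let R > 0 be such that η(Ω) = η(B_R(o)), where η is the measure with density x ↦ e^{−φ(‖x‖)} with respect to Lebesgue measure and B_R(o) is the open ball of radius R centered at the origin. (i) If v : [0,∞) → ℝ is nondecreasing and bounded on bounded sets, then ∫_Ω v(‖x‖) dη(x) ≥ ∫_{B_R(o)} v(‖x‖) dη(x). (ii) If u : [0,∞) → ℝ is nonincreasing and bounded on bounded sets, then ∫_Ω u(‖x‖) dη(x) ≤ ∫_{B_R(o)} u(‖x‖) dη(x). Moreover, if v (respectively u) is strictly increasing (respectively strictly decreasing), then equality in (i) (respectively (ii)) holds if and only if the symmetric difference of Ω and B_R(o) has Lebesgue measure zero. -/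
open MeasureTheory Set Metric

/-- The weighted measure `η` on `ℝⁿ`, i.e. the Lebesgue measure with density
`x ↦ exp (-φ ‖x‖)`. -/
noncomputable def wMeasure (n : ℕ) (φ : ℝ → ℝ) : Measure (EuclideanSpace ℝ (Fin n)) :=
  volume.withDensity fun x => ENNReal.ofReal (Real.exp (-φ ‖x‖))

lemma wMeasure_lt_top (n : ℕ) (φ : ℝ → ℝ) (hφ : Continuous φ)
    (A : Set (EuclideanSpace ℝ (Fin n))) (hA : MeasurableSet A)
    (hAb : Bornology.IsBounded A) : wMeasure n φ A < ⊤ := by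
  obtain ⟨M, hM⟩ := hAb.subset_closedBall 0
  set M' := max M 0 with hM'
  have hsub : A ⊆ closedBall 0 M' := hM.trans (closedBall_subset_closedBall (le_max_left _ _))
  have hcomp : IsCompact (closedBall (0 : EuclideanSpace ℝ (Fin n)) M') :=
    isCompact_closedBall _ _
  have hcont : Continuous fun x : EuclideanSpace ℝ (Fin n) => Real.exp (-φ ‖x‖) :=
    Real.continuous_exp.comp ((hφ.comp continuous_norm).neg)
  obtain ⟨K, hK⟩ := hcomp.exists_bound_of_continuousOn hcont.continuousOn
  have hbd : ∀ x ∈ A, ENNReal.ofReal (Real.exp (-φ ‖x‖)) ≤ ENNReal.ofReal K := by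
    intro x hx
    exact ENNReal.ofReal_le_ofReal ((Real.le_norm_self _).trans (hK x (hsub hx)))
  rw [wMeasure, withDensity_apply _ hA]
  calc ∫⁻ x in A, ENNReal.ofReal (Real.exp (-φ ‖x‖)) ∂volume
      ≤ ∫⁻ _ in A, ENNReal.ofReal K ∂volume := by
        refine lintegral_mono_ae ?_
        filter_upwards [ae_restrict_mem hA] with x hx using hbd x hx
    _ = ENNReal.ofReal K * volume A := by
        rw [lintegral_const, Measure.restrict_apply_univ]
    _ < ⊤ := by
        refine ENNReal.mul_lt_top ENNReal.ofReal_lt_top ?_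
        exact (measure_mono hsub).trans_lt hcomp.measure_lt_top

lemma wMeasure_null_iff (n : ℕ) (φ : ℝ → ℝ) (hφ : Continuous φ)
    (A : Set (EuclideanSpace ℝ (Fin n))) (hA : MeasurableSet A) :
    wMeasure n φ A = 0 ↔ volume A = 0 := by
  have hmeas : Measurable fun x : EuclideanSpace ℝ (Fin n) =>
      ENNReal.ofReal (Real.exp (-φ ‖x‖)) :=
    ENNReal.measurable_ofReal.comp
      (Real.continuous_exp.comp (hφ.comp continuous_norm).neg).measurable
  rw [wMeasure, withDensity_apply_eq_zero hmeas]
  have : {x : EuclideanSpace ℝ (Fin n) | ENNReal.ofReal (Real.exp (-φ ‖x‖)) ≠ 0} = univ := by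
    ext x; simp [ENNReal.ofReal_eq_zero, not_le, Real.exp_pos]
  rw [this, univ_inter]

lemma wMeasure_core (n : ℕ) (φ : ℝ → ℝ) (hφ : Continuous φ)
    (Ω : Set (EuclideanSpace ℝ (Fin n)))
    (hΩ_meas : MeasurableSet Ω) (hΩ_bdd : Bornology.IsBounded Ω)
    (R : ℝ) (hR : 0 < R)
    (hvol : wMeasure n φ Ω = wMeasure n φ (ball (0 : EuclideanSpace ℝ (Fin n)) R))
    (w : ℝ → ℝ) (hw : Monotone w)
    (hbd : ∀ M : ℝ, ∃ C : ℝ, ∀ t ∈ Icc (0 : ℝ) M, |w t| ≤ C) :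
    ((∫ x in Ω, w ‖x‖ ∂(wMeasure n φ)) ≥
      ∫ x in ball (0 : EuclideanSpace ℝ (Fin n)) R, w ‖x‖ ∂(wMeasure n φ)) ∧
    (StrictMonoOn w (Ici 0) →
      ((∫ x in Ω, w ‖x‖ ∂(wMeasure n φ)) =
        (∫ x in ball (0 : EuclideanSpace ℝ (Fin n)) R, w ‖x‖ ∂(wMeasure n φ)) ↔
        volume (symmDiff Ω (ball (0 : EuclideanSpace ℝ (Fin n)) R)) = 0)) := by
  set η := wMeasure n φ with hη
  set B := ball (0 : EuclideanSpace ℝ (Fin n)) R with hB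
  set f : EuclideanSpace ℝ (Fin n) → ℝ := fun x => w ‖x‖ with hf
  have hBm : MeasurableSet B := measurableSet_ball
  have hBb : Bornology.IsBounded B := isBounded_ball
  -- integrability on bounded measurable sets
  have hint : ∀ S : Set (EuclideanSpace ℝ (Fin n)), MeasurableSet S →
      Bornology.IsBounded S → IntegrableOn f S η := by
    intro S hSm hSb
    obtain ⟨M, hM⟩ := hSb.subset_closedBall 0
    set M' := max M 0
    obtain ⟨C, hC⟩ := hbd M'
    refine Measure.integrableOn_of_bounded (M := C)
      (wMeasure_lt_top n φ hφ S hSm hSb).ne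
      ((hw.measurable.comp measurable_norm).aestronglyMeasurable) ?_
    filter_upwards [ae_restrict_mem hSm] with x hx
    have h1 : ‖x‖ ≤ M' :=
      le_trans (by simpa [mem_closedBall, dist_zero_right] using hM hx) (le_max_left _ _)
    simpa [hf] using hC ‖x‖ ⟨norm_nonneg x, h1⟩
  have hintΩd : IntegrableOn f (Ω \ B) η :=
    hint _ (hΩ_meas.diff hBm) (hΩ_bdd.subset diff_subset)
  have hintBd : IntegrableOn f (B \ Ω) η :=
    hint _ (hBm.diff hΩ_meas) (hBb.subset diff_subset)
  have hintI : IntegrableOn f (Ω ∩ B) η :=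
    hint _ (hΩ_meas.inter hBm) (hΩ_bdd.subset inter_subset_left)
  have hfinI : η (Ω ∩ B) ≠ ⊤ :=
    (wMeasure_lt_top n φ hφ _ (hΩ_meas.inter hBm) (hΩ_bdd.subset inter_subset_left)).ne
  have hfinΩd : η (Ω \ B) ≠ ⊤ :=
    (wMeasure_lt_top n φ hφ _ (hΩ_meas.diff hBm) (hΩ_bdd.subset diff_subset)).ne
  have hfinBd : η (B \ Ω) ≠ ⊤ :=
    (wMeasure_lt_top n φ hφ _ (hBm.diff hΩ_meas) (hBb.subset diff_subset)).ne
  -- equal measures of the two differences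
  have hmeq : η (Ω \ B) = η (B \ Ω) := by
    have h1 : η (Ω ∩ B) + η (Ω \ B) = η Ω := measure_inter_add_diff Ω hBm
    have h2 : η (B ∩ Ω) + η (B \ Ω) = η B := measure_inter_add_diff B hΩ_meas
    rw [inter_comm] at h2
    have := h1.trans (hvol.trans h2.symm)
    exact (ENNReal.add_right_inj hfinI).mp this
  -- integral decompositions
  have hdisj1 : Disjoint (Ω ∩ B) (Ω \ B) :=
    (disjoint_sdiff_right (s := B) (t := Ω)).mono_left inter_subset_right
  have hdisj2 : Disjoint (Ω ∩ B) (B \ Ω) :=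
    (disjoint_sdiff_right (s := Ω) (t := B)).mono_left inter_subset_left
  have hsplit1 : (∫ x in Ω, f x ∂η) = (∫ x in Ω ∩ B, f x ∂η) + ∫ x in Ω \ B, f x ∂η := by
    rw [← setIntegral_union hdisj1 (hΩ_meas.diff hBm) hintI hintΩd, inter_union_diff]
  have hsplit2 : (∫ x in B, f x ∂η) = (∫ x in Ω ∩ B, f x ∂η) + ∫ x in B \ Ω, f x ∂η := by
    rw [← setIntegral_union hdisj2 (hBm.diff hΩ_meas) hintI hintBd, inter_comm,
      inter_union_diff]
  -- bounds
  have hge : (∫ x in Ω \ B, f x ∂η) ≥ (η (Ω \ B)).toReal * w R := by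
    have : (∫ _ in Ω \ B, w R ∂η) ≤ ∫ x in Ω \ B, f x ∂η := by
      refine setIntegral_mono_on (integrableOn_const hfinΩd) hintΩd
        (hΩ_meas.diff hBm) ?_
      intro x hx
      have : R ≤ ‖x‖ := by
        have := hx.2
        simpa [hB, mem_ball, dist_zero_right, not_lt] using this
      exact hw this
    simpa [setIntegral_const, smul_eq_mul, measureReal_def] using this
  have hle : (∫ x in B \ Ω, f x ∂η) ≤ (η (B \ Ω)).toReal * w R := by
    have : (∫ x in B \ Ω, f x ∂η) ≤ ∫ _ in B \ Ω, w R ∂η := by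
      refine setIntegral_mono_on hintBd (integrableOn_const hfinBd)
        (hBm.diff hΩ_meas) ?_
      intro x hx
      have : ‖x‖ ≤ R := by
        have := hx.1
        have := mem_ball.1 this
        rw [dist_zero_right] at this
        exact this.le
      exact hw this
    simpa [setIntegral_const, smul_eq_mul, measureReal_def] using this
  have htoReq : (η (Ω \ B)).toReal = (η (B \ Ω)).toReal := by rw [hmeq]
  constructor
  · rw [hsplit1, hsplit2]
    have : (∫ x in B \ Ω, f x ∂η) ≤ ∫ x in Ω \ B, f x ∂η := by
      calc (∫ x in B \ Ω, f x ∂η) ≤ (η (B \ Ω)).toReal * w R := hle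
        _ = (η (Ω \ B)).toReal * w R := by rw [htoReq]
        _ ≤ ∫ x in Ω \ B, f x ∂η := hge
    linarith
  · intro hstrict
    constructor
    · intro heq
      -- equality forces ∫_{B\Ω} (w R - f) = 0
      have heq2 : (∫ x in B \ Ω, f x ∂η) = (η (B \ Ω)).toReal * w R := by
        rw [hsplit1, hsplit2] at heq
        have h3 : (∫ x in Ω \ B, f x ∂η) = ∫ x in B \ Ω, f x ∂η := by linarith
        rw [htoReq] at hge
        linarith
      set g : EuclideanSpace ℝ (Fin n) → ℝ := fun x => w R - f x with hg
      have hgint : Integrable g (η.restrict (B \ Ω)) :=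
        (integrableOn_const hfinBd).sub hintBd
      have hgnn : 0 ≤ᵐ[η.restrict (B \ Ω)] g := by
        filter_upwards [ae_restrict_mem (hBm.diff hΩ_meas)] with x hx
        have hxR : ‖x‖ ≤ R := by
          have := mem_ball.1 hx.1; rw [dist_zero_right] at this; exact this.le
        simp only [hg, Pi.zero_apply, sub_nonneg]
        exact hw hxR
      have hgzero : (∫ x in B \ Ω, g x ∂η) = 0 := by
        rw [integral_sub (show IntegrableOn (fun _ => w R) (B \ Ω) η from integrableOn_const hfinBd) hintBd,
          setIntegral_const, smul_eq_mul, measureReal_def, heq2]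
        ring
      have hae : g =ᵐ[η.restrict (B \ Ω)] 0 :=
        (integral_eq_zero_iff_of_nonneg_ae hgnn hgint).mp hgzero
      -- on B \ Ω, g > 0 pointwise, so η (B \ Ω) = 0
      have hsubset : B \ Ω ⊆ {x | g x ≠ 0} := by
        intro x hx
        have hxR : ‖x‖ < R := by
          have := mem_ball.1 hx.1; rwa [dist_zero_right] at this
        have : f x < w R := hstrict (norm_nonneg x) hR.le hxR
        simp only [hg, mem_setOf_eq]
        intro h; rw [sub_eq_zero] at h; exact absurd h.symm this.ne
      have hnull : η.restrict (B \ Ω) {x | g x ≠ 0} = 0 := by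
        have := hae
        rw [Filter.EventuallyEq, ae_iff] at this
        simpa using this
      have hηBd : η (B \ Ω) = 0 := by
        have h1 : η.restrict (B \ Ω) (B \ Ω) ≤ 0 :=
          hnull ▸ measure_mono hsubset
        have h2 : η.restrict (B \ Ω) (B \ Ω) = η (B \ Ω) := by
          rw [Measure.restrict_apply (hBm.diff hΩ_meas), inter_self]
        rw [h2] at h1
        exact le_antisymm h1 (by positivity)
      have hηΩd : η (Ω \ B) = 0 := hmeq.trans hηBd
      have hv1 : volume (B \ Ω) = 0 :=
        (wMeasure_null_iff n φ hφ _ (hBm.diff hΩ_meas)).mp hηBd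
      have hv2 : volume (Ω \ B) = 0 :=
        (wMeasure_null_iff n φ hφ _ (hΩ_meas.diff hBm)).mp hηΩd
      rw [Set.symmDiff_def]
      exact measure_union_null hv2 hv1
    · intro hnull
      rw [Set.symmDiff_def] at hnull
      have h1 : volume (Ω \ B) = 0 := measure_mono_null subset_union_left hnull
      have h2 : volume (B \ Ω) = 0 := measure_mono_null subset_union_right hnull
      have hac : η ≪ volume := withDensity_absolutelyContinuous _ _
      have hae : Ω =ᵐ[η] B := by
        rw [ae_eq_set]
        exact ⟨hac h1, hac h2⟩
      exact setIntegral_congr_set hae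

/-- **Lemma 4.4 (Euclidean case)**: if `Ω ⊆ ℝⁿ` is a bounded measurable set with the same
weighted volume as the ball `B_R(o)` centered at the origin, then for every nondecreasing
function `v` (bounded on bounded sets) one has
`∫_Ω v(‖x‖) dη ≥ ∫_{B_R(o)} v(‖x‖) dη`, and for every nonincreasing function `u`
(bounded on bounded sets) one has `∫_Ω u(‖x‖) dη ≤ ∫_{B_R(o)} u(‖x‖) dη`; moreover, for
strictly monotone `v` (resp. `u`), equality holds if and only if the symmetric difference
of `Ω` and `B_R(o)` is Lebesgue-null. -/
theorem wMeasure_radial_integral_comparison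
    (n : ℕ) (hn : 2 ≤ n) (φ : ℝ → ℝ) (hφ : Continuous φ)
    (Ω : Set (EuclideanSpace ℝ (Fin n)))
    (hΩ_meas : MeasurableSet Ω) (hΩ_bdd : Bornology.IsBounded Ω)
    (R : ℝ) (hR : 0 < R)
    (hvol : wMeasure n φ Ω = wMeasure n φ (ball (0 : EuclideanSpace ℝ (Fin n)) R)) :
    (∀ v : ℝ → ℝ, MonotoneOn v (Ici 0) →
      (∀ M : ℝ, ∃ C : ℝ, ∀ t ∈ Icc (0 : ℝ) M, |v t| ≤ C) →
      (∫ x in Ω, v ‖x‖ ∂(wMeasure n φ)) ≥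
        ∫ x in ball (0 : EuclideanSpace ℝ (Fin n)) R, v ‖x‖ ∂(wMeasure n φ)) ∧
    (∀ u : ℝ → ℝ, AntitoneOn u (Ici 0) →
      (∀ M : ℝ, ∃ C : ℝ, ∀ t ∈ Icc (0 : ℝ) M, |u t| ≤ C) →
      (∫ x in Ω, u ‖x‖ ∂(wMeasure n φ)) ≤
        ∫ x in ball (0 : EuclideanSpace ℝ (Fin n)) R, u ‖x‖ ∂(wMeasure n φ)) ∧
    (∀ v : ℝ → ℝ, StrictMonoOn v (Ici 0) →
      (∀ M : ℝ, ∃ C : ℝ, ∀ t ∈ Icc (0 : ℝ) M, |v t| ≤ C) →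
      ((∫ x in Ω, v ‖x‖ ∂(wMeasure n φ)) =
        (∫ x in ball (0 : EuclideanSpace ℝ (Fin n)) R, v ‖x‖ ∂(wMeasure n φ)) ↔
        volume (symmDiff Ω (ball (0 : EuclideanSpace ℝ (Fin n)) R)) = 0)) ∧
    (∀ u : ℝ → ℝ, StrictAntiOn u (Ici 0) →
      (∀ M : ℝ, ∃ C : ℝ, ∀ t ∈ Icc (0 : ℝ) M, |u t| ≤ C) →
      ((∫ x in Ω, u ‖x‖ ∂(wMeasure n φ)) =
        (∫ x in ball (0 : EuclideanSpace ℝ (Fin n)) R, u ‖x‖ ∂(wMeasure n φ)) ↔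
        volume (symmDiff Ω (ball (0 : EuclideanSpace ℝ (Fin n)) R)) = 0)) := by
  set η := wMeasure n φ with hη
  set B := ball (0 : EuclideanSpace ℝ (Fin n)) R with hB
  -- transform a MonotoneOn function into a globally monotone one
  have key : ∀ v : ℝ → ℝ, MonotoneOn v (Ici 0) →
      (∀ M : ℝ, ∃ C : ℝ, ∀ t ∈ Icc (0 : ℝ) M, |v t| ≤ C) →
      ∃ w : ℝ → ℝ, Monotone w ∧ (∀ M : ℝ, ∃ C : ℝ, ∀ t ∈ Icc (0 : ℝ) M, |w t| ≤ C) ∧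
        (∀ x : EuclideanSpace ℝ (Fin n), w ‖x‖ = v ‖x‖) ∧
        (StrictMonoOn v (Ici 0) → StrictMonoOn w (Ici 0)) := by
    intro v hv hbd
    refine ⟨fun t => v (max t 0), ?_, ?_, ?_, ?_⟩
    · intro s t hst
      exact hv (le_max_right s 0) (le_max_right t 0) (max_le_max hst le_rfl)
    · intro M
      obtain ⟨C, hC⟩ := hbd M
      refine ⟨C, fun t ht => ?_⟩
      simp only [max_eq_left ht.1]
      exact hC t ht
    · intro x
      simp only [max_eq_left (norm_nonneg x)]
    · intro hs s hsmem t htmem hst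
      simp only [max_eq_left (mem_Ici.mp hsmem), max_eq_left (mem_Ici.mp htmem)]
      exact hs hsmem htmem hst
  have conv : ∀ (w v : ℝ → ℝ), (∀ x : EuclideanSpace ℝ (Fin n), w ‖x‖ = v ‖x‖) →
      ∀ S : Set (EuclideanSpace ℝ (Fin n)),
      (∫ x in S, v ‖x‖ ∂η) = ∫ x in S, w ‖x‖ ∂η := by
    intro w v hwv S
    exact integral_congr_ae (Filter.Eventually.of_forall fun x => (hwv x).symm)
  have keyA : ∀ u : ℝ → ℝ, AntitoneOn u (Ici 0) →
      (∀ M : ℝ, ∃ C : ℝ, ∀ t ∈ Icc (0 : ℝ) M, |u t| ≤ C) →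
      ∃ w : ℝ → ℝ, Monotone w ∧ (∀ M : ℝ, ∃ C : ℝ, ∀ t ∈ Icc (0 : ℝ) M, |w t| ≤ C) ∧
        (∀ x : EuclideanSpace ℝ (Fin n), w ‖x‖ = -u ‖x‖) ∧
        (StrictAntiOn u (Ici 0) → StrictMonoOn w (Ici 0)) := by
    intro u hu hbd
    refine ⟨fun t => -u (max t 0), ?_, ?_, ?_, ?_⟩
    · intro s t hst
      exact neg_le_neg (hu (le_max_right s 0) (le_max_right t 0) (max_le_max hst le_rfl))
    · intro M
      obtain ⟨C, hC⟩ := hbd M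
      refine ⟨C, fun t ht => ?_⟩
      simp only [max_eq_left ht.1, abs_neg]
      exact hC t ht
    · intro x
      simp only [max_eq_left (norm_nonneg x)]
    · intro hs s hsmem t htmem hst
      simp only [max_eq_left (mem_Ici.mp hsmem), max_eq_left (mem_Ici.mp htmem)]
      exact neg_lt_neg (hs hsmem htmem hst)
  refine ⟨?_, ?_, ?_, ?_⟩
  · intro v hv hbd
    obtain ⟨w, hwm, hwbd, hwe, -⟩ := key v hv hbd
    have := (wMeasure_core n φ hφ Ω hΩ_meas hΩ_bdd R hR hvol w hwm hwbd).1
    rw [conv w v hwe Ω, conv w v hwe B]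
    exact this
  · intro u hu hbd
    obtain ⟨w, hwm, hwbd, hwe, -⟩ := keyA u hu hbd
    have := (wMeasure_core n φ hφ Ω hΩ_meas hΩ_bdd R hR hvol w hwm hwbd).1
    have e1 : (∫ x in Ω, w ‖x‖ ∂η) = -∫ x in Ω, u ‖x‖ ∂η := by
      rw [← integral_neg]
      exact integral_congr_ae (Filter.Eventually.of_forall fun x => hwe x)
    have e2 : (∫ x in B, w ‖x‖ ∂η) = -∫ x in B, u ‖x‖ ∂η := by
      rw [← integral_neg]
      exact integral_congr_ae (Filter.Eventually.of_forall fun x => hwe x)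
    rw [e1, e2] at this
    linarith [this]
  · intro v hv hbd
    obtain ⟨w, hwm, hwbd, hwe, hws⟩ := key v hv.monotoneOn hbd
    have := (wMeasure_core n φ hφ Ω hΩ_meas hΩ_bdd R hR hvol w hwm hwbd).2 (hws hv)
    rw [conv w v hwe Ω, conv w v hwe B]
    exact this
  · intro u hu hbd
    obtain ⟨w, hwm, hwbd, hwe, hws⟩ := keyA u hu.antitoneOn hbd
    have hiff := (wMeasure_core n φ hφ Ω hΩ_meas hΩ_bdd R hR hvol w hwm hwbd).2 (hws hu)
    have e1 : (∫ x in Ω, w ‖x‖ ∂η) = -∫ x in Ω, u ‖x‖ ∂η := by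
      rw [← integral_neg]
      exact integral_congr_ae (Filter.Eventually.of_forall fun x => hwe x)
    have e2 : (∫ x in B, w ‖x‖ ∂η) = -∫ x in B, u ‖x‖ ∂η := by
      rw [← integral_neg]
      exact integral_congr_ae (Filter.Eventually.of_forall fun x => hwe x)
    rw [e1, e2, neg_inj] at hiff
    exact hiff
end

section
/- Let r₀ > 0 and μ > 0, let p : [0,r₀] → ℝ be continuous, positive, and differentiable on [0,r₀), and let T : [0,r₀] → ℝ be continuously differentiable with T' differentiable on [0,r₀), such that T'(0) = 0, T(t) > 0 for all t ∈ [0,r₀), T(r₀) = 0, and (p T')'(t) + μ p(t) T(t) = 0 for all t ∈ [0,r₀) (one-sided derivative at 0). Then T'(t) < 0 for every t ∈ (0,r₀). -/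
open Set

/-- **Strict decrease of the radial part of a sign-changing Neumann mode on its first
nodal interval** (from Section 5): if `p` is continuous, positive on `[0,r₀]` and
differentiable on `[0,r₀)`, `T` is continuously differentiable with `T'` differentiable on
`[0,r₀)`, `T'(0) = 0`, `T > 0` on `[0,r₀)`, `T(r₀) = 0`, and `(p T')' + μ p T = 0` on
`[0,r₀)` (one-sided derivative at `0`) with `μ > 0`, then `T' < 0` on `(0,r₀)`. -/
theorem radial_neumann_mode_strictly_decreasing
    (r₀ μ : ℝ) (hr₀ : 0 < r₀) (hμ : 0 < μ)
    (p T T' T'' : ℝ → ℝ)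
    (hp_cont : ContinuousOn p (Icc 0 r₀))
    (hp_pos : ∀ t ∈ Icc (0 : ℝ) r₀, 0 < p t)
    (hp_diff : ∀ t ∈ Ico (0 : ℝ) r₀, DifferentiableWithinAt ℝ p (Ico 0 r₀) t)
    (hT : ∀ t ∈ Icc (0 : ℝ) r₀, HasDerivWithinAt T (T' t) (Icc 0 r₀) t)
    (hT'cont : ContinuousOn T' (Icc 0 r₀))
    (hT'diff : ∀ t ∈ Ico (0 : ℝ) r₀, HasDerivWithinAt T' (T'' t) (Ico 0 r₀) t)
    (hT'0 : T' 0 = 0)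
    (hT_pos : ∀ t ∈ Ico (0 : ℝ) r₀, 0 < T t)
    (hTr₀ : T r₀ = 0)
    (hODE : ∀ t ∈ Ico (0 : ℝ) r₀,
      HasDerivWithinAt (fun s => p s * T' s) (-(μ * p t * T t)) (Ico 0 r₀) t) :
    ∀ t ∈ Ioo (0 : ℝ) r₀, T' t < 0 := by
  set g : ℝ → ℝ := fun s => p s * T' s with hg
  have hg_cont : ContinuousOn g (Icc 0 r₀) := hp_cont.mul hT'cont
  have hanti : StrictAntiOn g (Icc 0 r₀) := by
    apply strictAntiOn_of_deriv_neg (convex_Icc 0 r₀) hg_cont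
    intro x hx
    rw [interior_Icc] at hx
    have hx' : x ∈ Ico (0 : ℝ) r₀ := ⟨le_of_lt hx.1, hx.2⟩
    have hd : HasDerivAt g (-(μ * p x * T x)) x :=
      (hODE x hx').hasDerivAt (Ico_mem_nhds hx.1 hx.2)
    rw [hd.deriv]
    have h1 := hp_pos x ⟨le_of_lt hx.1, le_of_lt hx.2⟩
    have h2 := hT_pos x hx'
    nlinarith [mul_pos (mul_pos hμ h1) h2]
  intro t ht
  have h0 : g 0 = 0 := by simp [hg, hT'0]
  have hgt : g t < 0 := by
    have := hanti (left_mem_Icc.2 hr₀.le) ⟨ht.1.le, ht.2.le⟩ ht.1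
    linarith [this]
  have hpt : 0 < p t := hp_pos t ⟨ht.1.le, ht.2.le⟩
  have hgt' : p t * T' t < 0 := hgt
  nlinarith [hgt']
end

section
/- Let r₀ > 0, let w : (0,r₀] → ℝ be continuous and nonnegative, let p : (0,r₀] → ℝ be positive and twice continuously differentiable, and suppose (−p'/p)'(t) − w(t) ≥ 0 for all t ∈ (0,r₀). Let μ₀, μ₁ ∈ ℝ. Let T₁ : (0,r₀] → ℝ be twice continuously differentiable with T₁ > 0 and T₁' ≥ 0 on (0,r₀], satisfying (p T₁')'(t) + (μ₁ − w(t)) p(t) T₁(t) = 0 on (0,r₀]. Let T₀ : (0,r₀] → ℝ be three times continuously differentiable with T₀'(t) ≤ 0 for all t ∈ (0,r₀], T₀'(r₀) < 0 and T₀''(r₀) > 0, satisfying (p T₀')'(t) + μ₀ p(t) T₀(t) = 0 on (0,r₀]. Assume p(t)(T₁(t) T₀''(t) − T₁'(t) T₀'(t)) → 0 as t → 0⁺ and that s ↦ (μ₁ − μ₀ − (p'/p)'(s) − w(s)) p(s) T₁(s) T₀'(s) is integrable on (0,r₀). Then μ₁ < μ₀. -/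
open Set MeasureTheory

/-- **The first spherical-harmonic Neumann eigenvalue is smaller than the second purely
radial one** (key comparison in Section 5, identifying `μ_{1,1,φ}` as the first nonzero
Neumann eigenvalue): with `w ≥ 0` continuous, `p > 0` twice continuously differentiable
satisfying `(-p'/p)' - w ≥ 0` (here `m` denotes the derivative of `-p'/p`), `T₁ > 0` with
`T₁' ≥ 0` solving `(p T₁')' + (μ₁ - w) p T₁ = 0` on `(0,r₀]`, and `T₀` with `T₀' ≤ 0`,
`T₀'(r₀) < 0`, `T₀''(r₀) > 0` solving `(p T₀')' + μ₀ p T₀ = 0` on `(0,r₀]`, together with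
the vanishing of `p (T₁ T₀'' - T₁' T₀')` at `0⁺` and integrability of
`s ↦ (μ₁ - μ₀ + m(s) - w(s)) p(s) T₁(s) T₀'(s)` on `(0,r₀)`, one has `μ₁ < μ₀`. -/
theorem radial_neumann_eigenvalue_comparison
    (r₀ μ₀ μ₁ : ℝ) (hr₀ : 0 < r₀)
    (w p p' m T₁ T₁' T₀ T₀' T₀'' T₀''' : ℝ → ℝ)
    (hw_cont : ContinuousOn w (Ioc 0 r₀))
    (hw_nonneg : ∀ t ∈ Ioc (0 : ℝ) r₀, 0 ≤ w t)
    (hp_pos : ∀ t ∈ Ioc (0 : ℝ) r₀, 0 < p t)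
    (hp : ∀ t ∈ Ioc (0 : ℝ) r₀, HasDerivWithinAt p (p' t) (Ioc 0 r₀) t)
    (hp'_cont : ContinuousOn p' (Ioc 0 r₀))
    (hm : ∀ t ∈ Ioo (0 : ℝ) r₀, HasDerivAt (fun s => -(p' s / p s)) (m t) t)
    (hmw : ∀ t ∈ Ioo (0 : ℝ) r₀, w t ≤ m t)
    (hT₁_pos : ∀ t ∈ Ioc (0 : ℝ) r₀, 0 < T₁ t)
    (hT₁ : ∀ t ∈ Ioc (0 : ℝ) r₀, HasDerivWithinAt T₁ (T₁' t) (Ioc 0 r₀) t)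
    (hT₁'_cont : ContinuousOn T₁' (Ioc 0 r₀))
    (hT₁'_nonneg : ∀ t ∈ Ioc (0 : ℝ) r₀, 0 ≤ T₁' t)
    (hT₁ode : ∀ t ∈ Ioc (0 : ℝ) r₀,
      HasDerivWithinAt (fun s => p s * T₁' s) (-((μ₁ - w t) * p t * T₁ t)) (Ioc 0 r₀) t)
    (hT₀ : ∀ t ∈ Ioc (0 : ℝ) r₀, HasDerivWithinAt T₀ (T₀' t) (Ioc 0 r₀) t)
    (hT₀' : ∀ t ∈ Ioc (0 : ℝ) r₀, HasDerivWithinAt T₀' (T₀'' t) (Ioc 0 r₀) t)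
    (hT₀'' : ∀ t ∈ Ioc (0 : ℝ) r₀, HasDerivWithinAt T₀'' (T₀''' t) (Ioc 0 r₀) t)
    (hT₀'''_cont : ContinuousOn T₀''' (Ioc 0 r₀))
    (hT₀'_nonpos : ∀ t ∈ Ioc (0 : ℝ) r₀, T₀' t ≤ 0)
    (hT₀'r₀ : T₀' r₀ < 0)
    (hT₀''r₀ : 0 < T₀'' r₀)
    (hT₀ode : ∀ t ∈ Ioc (0 : ℝ) r₀,
      HasDerivWithinAt (fun s => p s * T₀' s) (-(μ₀ * p t * T₀ t)) (Ioc 0 r₀) t)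
    (hlim : Filter.Tendsto (fun t => p t * (T₁ t * T₀'' t - T₁' t * T₀' t))
      (nhdsWithin 0 (Ioi 0)) (nhds 0))
    (hint : IntegrableOn (fun s => (μ₁ - μ₀ + (m s - w s)) * p s * T₁ s * T₀' s)
      (Ioo 0 r₀)) :
    μ₁ < μ₀ := by
  by_contra hcon
  push_neg at hcon
  set W : ℝ → ℝ := fun t => p t * (T₁ t * T₀'' t - T₁' t * T₀' t) with hWdef
  have hIoo : Ioo (0:ℝ) r₀ ⊆ Ioc 0 r₀ := Ioo_subset_Ioc_self
  have hnb : ∀ t ∈ Ioo (0:ℝ) r₀, Ioc 0 r₀ ∈ nhds t := fun t ht =>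
    Filter.mem_of_superset (Ioo_mem_nhds ht.1 ht.2) hIoo
  -- continuity of W on Ioc
  have hpc : ContinuousOn p (Ioc 0 r₀) := fun t ht => (hp t ht).continuousWithinAt
  have hT₁c : ContinuousOn T₁ (Ioc 0 r₀) := fun t ht => (hT₁ t ht).continuousWithinAt
  have hT₀'c : ContinuousOn T₀' (Ioc 0 r₀) := fun t ht => (hT₀' t ht).continuousWithinAt
  have hT₀''c : ContinuousOn T₀'' (Ioc 0 r₀) := fun t ht => (hT₀'' t ht).continuousWithinAt
  have hWc : ContinuousOn W (Ioc 0 r₀) :=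
    hpc.mul ((hT₁c.mul hT₀''c).sub (hT₁'_cont.mul hT₀'c))
  -- pointwise ODE identity for T₀ on the open interval
  have keyA : ∀ s ∈ Ioo (0:ℝ) r₀,
      p s * T₀'' s = -(μ₀ * p s * T₀ s) - p' s * T₀' s := by
    intro s hs
    have h1 : HasDerivAt (fun u => p u * T₀' u) (-(μ₀ * p s * T₀ s)) s :=
      (hT₀ode s (hIoo hs)).hasDerivAt (hnb s hs)
    have h2 : HasDerivAt (fun u => p u * T₀' u) (p' s * T₀' s + p s * T₀'' s) s :=
      ((hp s (hIoo hs)).hasDerivAt (hnb s hs)).mul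
        ((hT₀' s (hIoo hs)).hasDerivAt (hnb s hs))
    have h3 := h1.unique h2
    linarith
  -- derivative of W on the open interval
  have hderivW : ∀ t ∈ Ioo (0:ℝ) r₀,
      HasDerivAt W ((μ₁ - μ₀ + (m t - w t)) * p t * T₁ t * T₀' t) t := by
    intro t ht
    have hpt : HasDerivAt p (p' t) t := (hp t (hIoo ht)).hasDerivAt (hnb t ht)
    have hT₁t : HasDerivAt T₁ (T₁' t) t := (hT₁ t (hIoo ht)).hasDerivAt (hnb t ht)
    have hT₀t : HasDerivAt T₀ (T₀' t) t := (hT₀ t (hIoo ht)).hasDerivAt (hnb t ht)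
    have hT₀'t : HasDerivAt T₀' (T₀'' t) t := (hT₀' t (hIoo ht)).hasDerivAt (hnb t ht)
    have hodet : HasDerivAt (fun s => p s * T₁' s) (-((μ₁ - w t) * p t * T₁ t)) t :=
      (hT₁ode t (hIoo ht)).hasDerivAt (hnb t ht)
    have hpt0 : p t ≠ 0 := (hp_pos t (hIoo ht)).ne'
    -- derivative of T₀'' via the ODE identity
    have hg : HasDerivAt (fun s => -(μ₀ * T₀ s) + (-(p' s / p s)) * T₀' s)
        (-(μ₀ * T₀' t) + (m t * T₀' t + (-(p' t / p t)) * T₀'' t)) t :=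
      ((hT₀t.const_mul μ₀).neg).add ((hm t ht).mul hT₀'t)
    have heq : T₀'' =ᶠ[nhds t] fun s => -(μ₀ * T₀ s) + (-(p' s / p s)) * T₀' s := by
      filter_upwards [Ioo_mem_nhds ht.1 ht.2] with s hs
      have hps : p s ≠ 0 := (hp_pos s (hIoo hs)).ne'
      have h3 := keyA s hs
      field_simp
      linarith
    have hT₀''d : HasDerivAt T₀''
        (-(μ₀ * T₀' t) + (m t * T₀' t + (-(p' t / p t)) * T₀'' t)) t :=
      hg.congr_of_eventuallyEq heq
    have hpT₀'' : HasDerivAt (fun s => p s * T₀'' s)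
        (p' t * T₀'' t + p t * (-(μ₀ * T₀' t) + (m t * T₀' t + (-(p' t / p t)) * T₀'' t))) t :=
      hpt.mul hT₀''d
    have hG : HasDerivAt (fun s => T₁ s * (p s * T₀'' s) - (p s * T₁' s) * T₀' s)
        (T₁' t * (p t * T₀'' t) +
          T₁ t * (p' t * T₀'' t + p t * (-(μ₀ * T₀' t) + (m t * T₀' t + (-(p' t / p t)) * T₀'' t)))
          - ((-((μ₁ - w t) * p t * T₁ t)) * T₀' t + (p t * T₁' t) * T₀'' t)) t :=
      (hT₁t.mul hpT₀'').sub (hodet.mul hT₀'t)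
    have hWG : W = fun s => T₁ s * (p s * T₀'' s) - (p s * T₁' s) * T₀' s := by
      funext s; simp only [hWdef]; ring
    rw [hWG]
    convert hG using 1
    field_simp
    ring
  -- W is antitone on Ioc
  have hanti : AntitoneOn W (Ioc 0 r₀) := by
    apply antitoneOn_of_deriv_nonpos (convex_Ioc 0 r₀) hWc
    · rw [interior_Ioc]
      exact fun x hx => (hderivW x hx).differentiableAt.differentiableWithinAt
    · rw [interior_Ioc]
      intro x hx
      rw [(hderivW x hx).deriv]
      have hc : 0 ≤ μ₁ - μ₀ + (m x - w x) := by have := hmw x hx; linarith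
      exact mul_nonpos_of_nonneg_of_nonpos
        (mul_nonneg (mul_nonneg hc (hp_pos x (hIoo hx)).le) (hT₁_pos x (hIoo hx)).le)
        (hT₀'_nonpos x (hIoo hx))
  have hr₀mem : r₀ ∈ Ioc (0:ℝ) r₀ := ⟨hr₀, le_refl r₀⟩
  have hWr₀pos : 0 < W r₀ := by
    have h1 : 0 < T₁ r₀ * T₀'' r₀ := mul_pos (hT₁_pos r₀ hr₀mem) hT₀''r₀
    have h2 : T₁' r₀ * T₀' r₀ ≤ 0 :=
      mul_nonpos_of_nonneg_of_nonpos (hT₁'_nonneg r₀ hr₀mem) hT₀'r₀.le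
    have h3 := hp_pos r₀ hr₀mem
    simp only [hWdef]
    nlinarith
  have hev : ∀ᶠ t in nhdsWithin 0 (Ioi 0), W r₀ ≤ W t := by
    filter_upwards [Ioo_mem_nhdsGT hr₀] with t ht
    exact hanti (hIoo ht) hr₀mem ht.2.le
  have hle : W r₀ ≤ 0 := ge_of_tendsto hlim hev
  linarith
end
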